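/- Let φ_0 = 1, φ_n = 2 for n ≥ 1, with induced inner product ⟨·,·⟩_b on polynomials (corresponding to b(z) = (1+z)/2). Define Q_0 = 1 and Q_n(z) = 1 + (z−1)(a_0 + a_1 z + ⋯ + a_{n−1} z^{n−1}) where a_k = (1/√5)((1+√5)/2)^{2k+1} − (1/√5)((1−√5)/2)^{2k+1}. Then ‖Q_n‖_b² = 2 + 4·Σ_{k=0}^{n−1} a_k², and consequently ‖Q_n‖_b / ((3+√5)/2)^n → 2·5^{1/4}/5 as n → ∞. -/

import Mathlib

open Finset Polynomial Complex

noncomputable def dbInner (φ : ℕ → ℂ) (j k : ℕ) : ℂ :=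
  (if j = k then 1 else 0) +
    if j ≤ k then ∑ s ∈ Finset.range (j + 1), (starRingEnd ℂ) (φ s) * φ (k - j + s)
    else ∑ s ∈ Finset.range (k + 1), φ s * (starRingEnd ℂ) (φ (j - k + s))

lemma phi_conj (m : ℕ) : (starRingEnd ℂ) (if m = 0 then (1:ℂ) else 2) = (if m = 0 then (1:ℂ) else 2) := by
  split
  · exact map_one _
  · exact map_ofNat (starRingEnd ℂ) 2

lemma sum_phi (m : ℕ) : ∑ s ∈ Finset.range (m+1), (if s = 0 then (1:ℂ) else 2) = 2*m+1 := by
  induction m with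
  | zero => simp
  | succ m ih =>
      rw [Finset.sum_range_succ, ih, if_neg (Nat.succ_ne_zero m)]; push_cast; ring

lemma sum_phi2 (m : ℕ) : ∑ s ∈ Finset.range (m+1), (if s = 0 then (1:ℂ) else 4) = 4*m+1 := by
  induction m with
  | zero => simp
  | succ m ih =>
      rw [Finset.sum_range_succ, ih, if_neg (Nat.succ_ne_zero m)]; push_cast; ring

lemma db_eq (j k : ℕ) :
    dbInner (fun m => if m = 0 then 1 else 2) j k = ((min j k : ℕ) : ℂ) * 4 + 2 := by
  unfold dbInner
  rcases lt_trichotomy j k with h | h | h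
  · rw [if_neg h.ne, if_pos h.le]
    have h1 : ∀ s ∈ Finset.range (j+1),
        (starRingEnd ℂ) (if s = 0 then (1:ℂ) else 2) * (if k - j + s = 0 then (1:ℂ) else 2)
        = (if s = 0 then (1:ℂ) else 2) * 2 := by
      intro s hs
      rw [phi_conj, if_neg (show ¬(k - j + s = 0) by omega)]
    rw [Finset.sum_congr rfl h1, ← Finset.sum_mul, sum_phi, min_eq_left h.le]
    push_cast; ring
  · subst h
    rw [if_pos rfl, if_pos le_rfl]
    have h1 : ∀ s ∈ Finset.range (j+1),
        (starRingEnd ℂ) (if s = 0 then (1:ℂ) else 2) * (if j - j + s = 0 then (1:ℂ) else 2)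
        = (if s = 0 then (1:ℂ) else 4) := by
      intro s hs; rw [phi_conj]
      simp only [Nat.sub_self, Nat.zero_add]
      split <;> first | norm_num | exact map_ofNat (starRingEnd ℂ) 2
    rw [Finset.sum_congr rfl h1, sum_phi2, min_self]
    push_cast; ring
  · rw [if_neg h.ne', if_neg (by omega)]
    have h1 : ∀ s ∈ Finset.range (k+1),
        (if s = 0 then (1:ℂ) else 2) * (starRingEnd ℂ) (if j - k + s = 0 then (1:ℂ) else 2)
        = (if s = 0 then (1:ℂ) else 2) * 2 := by
      intro s hs
      rw [phi_conj, if_neg (show ¬(j - k + s = 0) by omega)]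
    rw [Finset.sum_congr rfl h1, ← Finset.sum_mul, sum_phi, min_eq_right h.le]
    push_cast; ring


noncomputable def polyInner (φ : ℕ → ℂ) (p q : Polynomial ℂ) : ℂ :=
  ∑ j ∈ p.support, ∑ k ∈ q.support, p.coeff j * (starRingEnd ℂ) (q.coeff k) * dbInner φ j k

lemma polyInner_eq_range (φ : ℕ → ℂ) (p q : Polynomial ℂ) (N M : ℕ)
    (hp : p.natDegree < N) (hq : q.natDegree < M) :
    polyInner φ p q = ∑ j ∈ Finset.range N, ∑ k ∈ Finset.range M,
      p.coeff j * (starRingEnd ℂ) (q.coeff k) * dbInner φ j k := by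
  unfold polyInner
  have h1 : ∀ j : ℕ, ∑ k ∈ q.support, p.coeff j * (starRingEnd ℂ) (q.coeff k) * dbInner φ j k
      = ∑ k ∈ Finset.range M, p.coeff j * (starRingEnd ℂ) (q.coeff k) * dbInner φ j k := by
    intro j
    refine Finset.sum_subset (fun k hk => Finset.mem_range.2 ?_) (fun k _ hk => ?_)
    · exact lt_of_le_of_lt (Polynomial.le_natDegree_of_ne_zero (Polynomial.mem_support_iff.1 hk)) hq
    · rw [Polynomial.notMem_support_iff.1 hk]; simp
  simp_rw [h1]
  refine Finset.sum_subset (fun j hj => Finset.mem_range.2 ?_) (fun j _ hj => ?_)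
  · exact lt_of_le_of_lt (Polynomial.le_natDegree_of_ne_zero (Polynomial.mem_support_iff.1 hj)) hp
  · exact Finset.sum_eq_zero fun k _ => by rw [Polynomial.notMem_support_iff.1 hj]; simp

lemma polyInner_add_left (φ : ℕ → ℂ) (p r q : Polynomial ℂ) :
    polyInner φ (p + r) q = polyInner φ p q + polyInner φ r q := by
  set N := max (max p.natDegree r.natDegree) (p+r).natDegree + 1 with hN
  have h1 : (p+r).natDegree < N := by omega
  have h2 : p.natDegree < N := by omega
  have h3 : r.natDegree < N := by omega
  have hq : q.natDegree < q.natDegree + 1 := Nat.lt_succ_self _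
  rw [polyInner_eq_range φ (p+r) q N (q.natDegree+1) h1 hq,
    polyInner_eq_range φ p q N (q.natDegree+1) h2 hq,
    polyInner_eq_range φ r q N (q.natDegree+1) h3 hq]
  simp [Polynomial.coeff_add, add_mul, Finset.sum_add_distrib]

lemma polyInner_add_right (φ : ℕ → ℂ) (p q r : Polynomial ℂ) :
    polyInner φ p (q + r) = polyInner φ p q + polyInner φ p r := by
  set M := max (max q.natDegree r.natDegree) (q+r).natDegree + 1 with hM
  have h1 : (q+r).natDegree < M := by omega
  have h2 : q.natDegree < M := by omega
  have h3 : r.natDegree < M := by omega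
  have hp : p.natDegree < p.natDegree + 1 := Nat.lt_succ_self _
  rw [polyInner_eq_range φ p (q+r) (p.natDegree+1) M hp h1,
    polyInner_eq_range φ p q (p.natDegree+1) M hp h2,
    polyInner_eq_range φ p r (p.natDegree+1) M hp h3]
  simp [Polynomial.coeff_add, map_add, mul_add, add_mul, Finset.sum_add_distrib]

/-- The odd-indexed Fibonacci numbers via Binet's formula. -/
noncomputable def fibA (k : ℕ) : ℝ :=
  (1 / Real.sqrt 5) * ((1 + Real.sqrt 5) / 2) ^ (2 * k + 1)
    - (1 / Real.sqrt 5) * ((1 - Real.sqrt 5) / 2) ^ (2 * k + 1)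

/-- Q_n = 1 + (z-1)(a_0 + a_1 z + ⋯ + a_{n-1} z^{n-1}). -/
noncomputable def QFM (n : ℕ) : Polynomial ℂ :=
  1 + (X - 1) * ∑ k ∈ Finset.range n, Polynomial.C ((fibA k : ℝ) : ℂ) * X ^ k

lemma QFM_succ (n : ℕ) : QFM (n+1) = QFM n + Polynomial.C ((fibA n : ℝ) : ℂ) * (X^(n+1) - X^n) := by
  unfold QFM
  rw [Finset.sum_range_succ]
  ring

lemma QFM_natDegree (n : ℕ) : (QFM n).natDegree ≤ n := by
  induction n with
  | zero => simp [QFM]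
  | succ n ih =>
      rw [QFM_succ]
      refine (Polynomial.natDegree_add_le _ _).trans (max_le (ih.trans (by omega)) ?_)
      refine (Polynomial.natDegree_mul_le).trans ?_
      simp only [Polynomial.natDegree_C, Nat.zero_add]
      exact (Polynomial.natDegree_sub_le _ _).trans (by simp)

lemma sum_pick (g : ℕ → ℂ) (n : ℕ) :
    ∑ k ∈ Finset.range (n+2), g k * ((if k = n+1 then (1:ℂ) else 0) - (if k = n then (1:ℂ) else 0))
      = g (n+1) - g n := by
  simp only [mul_sub, mul_ite, mul_one, mul_zero, Finset.sum_sub_distrib,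
    Finset.sum_ite_eq' (Finset.range (n+2))]
  rw [if_pos (Finset.mem_range.2 (by omega)), if_pos (Finset.mem_range.2 (by omega))]

lemma coeff_R (n : ℕ) (a : ℂ) (j : ℕ) :
    (Polynomial.C a * (X^(n+1) - X^n) : Polynomial ℂ).coeff j
      = a * ((if j = n+1 then 1 else 0) - (if j = n then 1 else 0)) := by
  simp [Polynomial.coeff_X_pow, mul_sub]

lemma conj_coeff_R (n : ℕ) (b : ℝ) (j : ℕ) :
    (starRingEnd ℂ) ((Polynomial.C ((b:ℝ):ℂ) * (X^(n+1) - X^n) : Polynomial ℂ).coeff j)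
      = ((b:ℝ):ℂ) * ((if j = n+1 then 1 else 0) - (if j = n then 1 else 0)) := by
  rw [coeff_R]
  simp [map_mul, map_sub, Complex.conj_ofReal, apply_ite (starRingEnd ℂ)]

lemma R_natDegree (n : ℕ) (a : ℂ) :
    (Polynomial.C a * (X^(n+1) - X^n) : Polynomial ℂ).natDegree ≤ n+1 := by
  refine (Polynomial.natDegree_mul_le).trans ?_
  simp only [Polynomial.natDegree_C, Nat.zero_add]
  exact (Polynomial.natDegree_sub_le _ _).trans (by simp)

lemma inner_QR (n : ℕ) :
    polyInner (fun m => if m = 0 then 1 else 2) (QFM n)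
      (Polynomial.C ((fibA n : ℝ) : ℂ) * (X^(n+1) - X^n)) = 0 := by
  set a' : ℂ := ((fibA n : ℝ) : ℂ) with ha
  rw [polyInner_eq_range _ _ _ (n+1) (n+2)
    (lt_of_le_of_lt (QFM_natDegree n) (by omega))
    (lt_of_le_of_lt (R_natDegree n a') (by omega))]
  refine Finset.sum_eq_zero fun j hj => ?_
  have key : ∑ k ∈ Finset.range (n+2), (QFM n).coeff j *
      (starRingEnd ℂ) ((Polynomial.C a' * (X^(n+1) - X^n) : Polynomial ℂ).coeff k) *
      dbInner (fun m => if m = 0 then 1 else 2) j k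
      = (QFM n).coeff j * a' * dbInner (fun m => if m = 0 then 1 else 2) j (n+1)
        - (QFM n).coeff j * a' * dbInner (fun m => if m = 0 then 1 else 2) j n := by
    rw [← sum_pick (fun k => (QFM n).coeff j * a' * dbInner (fun m => if m = 0 then 1 else 2) j k) n]
    refine Finset.sum_congr rfl fun k _ => ?_
    rw [conj_coeff_R]
    ring
  rw [key, db_eq, db_eq]
  have hj' : j ≤ n := by simpa using Nat.lt_succ_iff.1 (Finset.mem_range.1 hj)
  rw [min_eq_left (by omega), min_eq_left (by omega)]
  ring

lemma polyInner_conj (p q : Polynomial ℂ) :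
    polyInner (fun m => if m = 0 then 1 else 2) q p
      = (starRingEnd ℂ) (polyInner (fun m => if m = 0 then 1 else 2) p q) := by
  unfold polyInner
  rw [map_sum, Finset.sum_comm]
  refine Finset.sum_congr rfl fun j hj => ?_
  rw [map_sum]
  refine Finset.sum_congr rfl fun k hk => ?_
  rw [db_eq, db_eq, min_comm]
  simp only [map_mul, map_add, Complex.conj_conj, map_natCast, map_ofNat]
  ring

lemma inner_RQ (n : ℕ) :
    polyInner (fun m => if m = 0 then 1 else 2)
      (Polynomial.C ((fibA n : ℝ) : ℂ) * (X^(n+1) - X^n)) (QFM n) = 0 := by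
  rw [polyInner_conj, inner_QR, map_zero]

lemma inner_RR (n : ℕ) :
    polyInner (fun m => if m = 0 then 1 else 2)
      (Polynomial.C ((fibA n : ℝ) : ℂ) * (X^(n+1) - X^n))
      (Polynomial.C ((fibA n : ℝ) : ℂ) * (X^(n+1) - X^n))
      = 4 * ((fibA n : ℝ) : ℂ)^2 := by
  set a' : ℂ := ((fibA n : ℝ) : ℂ) with ha
  rw [polyInner_eq_range _ _ _ (n+2) (n+2)
    (lt_of_le_of_lt (R_natDegree n a') (by omega))
    (lt_of_le_of_lt (R_natDegree n a') (by omega))]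
  have key : ∀ j, ∑ k ∈ Finset.range (n+2),
      (Polynomial.C a' * (X^(n+1) - X^n) : Polynomial ℂ).coeff j *
      (starRingEnd ℂ) ((Polynomial.C a' * (X^(n+1) - X^n) : Polynomial ℂ).coeff k) *
      dbInner (fun m => if m = 0 then 1 else 2) j k
      = (Polynomial.C a' * (X^(n+1) - X^n) : Polynomial ℂ).coeff j * a' *
          dbInner (fun m => if m = 0 then 1 else 2) j (n+1)
        - (Polynomial.C a' * (X^(n+1) - X^n) : Polynomial ℂ).coeff j * a' *
          dbInner (fun m => if m = 0 then 1 else 2) j n := by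
    intro j
    rw [← sum_pick (fun k => (Polynomial.C a' * (X^(n+1) - X^n) : Polynomial ℂ).coeff j * a' *
      dbInner (fun m => if m = 0 then 1 else 2) j k) n]
    refine Finset.sum_congr rfl fun k _ => ?_
    rw [conj_coeff_R]
    ring
  simp_rw [key]
  have key2 := sum_pick (fun j => a' * a' *
        dbInner (fun m => if m = 0 then 1 else 2) j (n+1)
      - a' * a' * dbInner (fun m => if m = 0 then 1 else 2) j n) n
  rw [show (∑ j ∈ Finset.range (n+2),
      ((Polynomial.C a' * (X^(n+1) - X^n) : Polynomial ℂ).coeff j * a' *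
          dbInner (fun m => if m = 0 then 1 else 2) j (n+1)
        - (Polynomial.C a' * (X^(n+1) - X^n) : Polynomial ℂ).coeff j * a' *
          dbInner (fun m => if m = 0 then 1 else 2) j n))
      = ∑ j ∈ Finset.range (n+2),
        (a' * a' * dbInner (fun m => if m = 0 then 1 else 2) j (n+1)
          - a' * a' * dbInner (fun m => if m = 0 then 1 else 2) j n) *
          ((if j = n+1 then 1 else 0) - (if j = n then 1 else 0))
    from Finset.sum_congr rfl fun j _ => by rw [coeff_R]; ring]
  rw [key2]
  rw [db_eq, db_eq, db_eq, db_eq, min_self, min_self,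
    min_eq_right (by omega : n ≤ n+1), min_eq_left (by omega : n ≤ n+1)]
  push_cast
  ring

lemma main1 (n : ℕ) :
    polyInner (fun m => if m = 0 then 1 else 2) (QFM n) (QFM n)
      = ((2 + 4 * ∑ k ∈ Finset.range n, fibA k ^ 2 : ℝ) : ℂ) := by
  induction n with
  | zero =>
      have hQ : QFM 0 = 1 := by simp [QFM]
      rw [hQ, polyInner_eq_range _ _ _ 1 1 (by simp) (by simp)]
      simp [db_eq]
  | succ n ih =>
      rw [QFM_succ, polyInner_add_left, polyInner_add_right, polyInner_add_right,
        ih, inner_QR, inner_RQ, inner_RR, Finset.sum_range_succ]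
      push_cast
      ring

lemma alg_aux (A B a b : ℝ) (n : ℕ) (ha : a ≠ 0) (hb : b ≠ 0) (hA : A ≠ 0) :
    (2 + 4*((A*((A^2)^n-1)/a + B*((B^2)^n-1)/b + 2*(n:ℝ))/5))/(A^2)^n
      = (2 - (4/5)*(A/a) - (4/5)*(B/b))*((A^2)⁻¹)^n + (8/5)*((n:ℝ)*((A^2)⁻¹)^n)
        + ((4/5)*(B/b))*(B^2/A^2)^n + (4/5)*(A/a) := by
  have hP : ((A^2)^n : ℝ) ≠ 0 := pow_ne_zero _ (pow_ne_zero _ hA)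
  rw [div_pow, inv_pow]
  field_simp
  ring

set_option maxHeartbeats 4000000 in
lemma part2 :
    Filter.Tendsto
      (fun n : ℕ =>
        Real.sqrt (polyInner (fun m => if m = 0 then 1 else 2) (QFM n) (QFM n)).re
          / ((3 + Real.sqrt 5) / 2) ^ n)
      Filter.atTop (nhds (2 * (5 : ℝ) ^ ((1 : ℝ) / 4) / 5)) := by
  have hs2 : Real.sqrt 5 ^ 2 = 5 := Real.sq_sqrt (by norm_num)
  have hs0 : 0 < Real.sqrt 5 := Real.sqrt_pos.2 (by norm_num)
  set s := Real.sqrt 5 with hs_def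
  have hs_gt : 2 < s := by nlinarith
  have hs_lt : s < 2.5 := by nlinarith
  set A := (3 + s)/2 with hA_def
  set B := (3 - s)/2 with hB_def
  have hA1 : 1 < A := by rw [hA_def]; nlinarith
  have hA0 : 0 < A := by linarith
  have hB0 : 0 < B := by rw [hB_def]; nlinarith
  have hB1 : B < 1 := by rw [hB_def]; nlinarith
  have hA2gt : 1 < A^2 := by nlinarith
  have hA2ne : A^2 - 1 ≠ 0 := by nlinarith
  have hB2ne : B^2 - 1 ≠ 0 := by nlinarith
  set g : ℕ → ℝ := fun n => 2 + 4 * ∑ k ∈ Finset.range n, fibA k ^ 2 with hg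
  have hre : ∀ n, (polyInner (fun m => if m = 0 then 1 else 2) (QFM n) (QFM n)).re = g n := by
    intro n; rw [main1 n]; exact Complex.ofReal_re _
  have hgpos : ∀ n, 0 ≤ g n := by
    intro n
    have h1 : 0 ≤ ∑ k ∈ Finset.range n, fibA k ^ 2 := Finset.sum_nonneg fun k _ => sq_nonneg _
    rw [hg]; dsimp only; linarith
  -- squared Binet
  have hαβ : ((1+s)/2)*((1-s)/2) = -1 := by nlinarith
  have hα2 : ((1+s)/2)^2 = A := by rw [hA_def]; nlinarith
  have hβ2 : ((1-s)/2)^2 = B := by rw [hB_def]; nlinarith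
  have fib_sq : ∀ k : ℕ, fibA k ^ 2 = (A^(2*k+1) + B^(2*k+1) + 2)/5 := by
    intro k
    have e1 : ((1+s)/2)^(2*k+1) * ((1-s)/2)^(2*k+1) = -1 := by
      rw [← mul_pow, hαβ]; exact Odd.neg_one_pow ⟨k, by ring⟩
    have e2 : (((1+s)/2)^(2*k+1))^2 = A^(2*k+1) := by
      rw [← pow_mul, mul_comm (2*k+1) 2, pow_mul, hα2]
    have e3 : (((1-s)/2)^(2*k+1))^2 = B^(2*k+1) := by
      rw [← pow_mul, mul_comm (2*k+1) 2, pow_mul, hβ2]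
    have expand : fibA k ^ 2 =
        ((((1+s)/2)^(2*k+1))^2 - 2*(((1+s)/2)^(2*k+1) * ((1-s)/2)^(2*k+1))
          + (((1-s)/2)^(2*k+1))^2)/s^2 := by
      unfold fibA
      rw [← hs_def]
      field_simp
      ring
    rw [expand, e1, e2, e3, hs2]
    ring
  -- geometric sums
  have hA2ne1 : (A^2 : ℝ) ≠ 1 := by intro h; exact hA2ne (by rw [h]; ring)
  have hB2ne1 : (B^2 : ℝ) ≠ 1 := by intro h; exact hB2ne (by rw [h]; ring)
  have sA : ∀ n : ℕ, ∑ k ∈ Finset.range n, A^(2*k+1) = A * ((A^2)^n - 1)/(A^2 - 1) := by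
    intro n
    have h1 : ∀ k, A^(2*k+1) = A * (A^2)^k := by
      intro k; rw [← pow_mul, pow_succ, mul_comm (A^(2*k)) A]
    simp_rw [h1, ← Finset.mul_sum, geom_sum_eq hA2ne1, mul_div_assoc]
  have sB : ∀ n : ℕ, ∑ k ∈ Finset.range n, B^(2*k+1) = B * ((B^2)^n - 1)/(B^2 - 1) := by
    intro n
    have h1 : ∀ k, B^(2*k+1) = B * (B^2)^k := by
      intro k; rw [← pow_mul, pow_succ, mul_comm (B^(2*k)) B]
    simp_rw [h1, ← Finset.mul_sum, geom_sum_eq hB2ne1, mul_div_assoc]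
  have sum_closed : ∀ n : ℕ, ∑ k ∈ Finset.range n, fibA k ^ 2
      = (A * ((A^2)^n - 1)/(A^2 - 1) + B * ((B^2)^n - 1)/(B^2 - 1) + 2*n)/5 := by
    intro n
    rw [Finset.sum_congr rfl fun k _ => fib_sq k, ← Finset.sum_div,
      Finset.sum_add_distrib, Finset.sum_add_distrib, Finset.sum_const,
      Finset.card_range, sA, sB, nsmul_eq_mul]
    ring_nf
  -- decomposition of g n / (A^2)^n
  have hApow : ∀ n : ℕ, (0:ℝ) < (A^2)^n := fun n => pow_pos (by positivity) n
  have funeq : ∀ n : ℕ, g n / (A^2)^n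
      = (2 - (4/5)*(A/(A^2-1)) - (4/5)*(B/(B^2-1))) * ((A^2)⁻¹)^n
        + (8/5) * ((n : ℝ) * ((A^2)⁻¹)^n)
        + ((4/5)*(B/(B^2-1))) * (B^2/A^2)^n
        + (4/5)*(A/(A^2-1)) := by
    intro n
    have h := alg_aux A B (A^2-1) (B^2-1) n hA2ne hB2ne (ne_of_gt hA0)
    rw [hg]; dsimp only
    rw [sum_closed n, h]
  have t1 : Filter.Tendsto (fun n : ℕ => ((A^2)⁻¹)^n) Filter.atTop (nhds 0) :=
    tendsto_pow_atTop_nhds_zero_of_lt_one (by positivity) (by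
      rw [inv_lt_one_iff₀]; right; exact hA2gt)
  have t2 : Filter.Tendsto (fun n : ℕ => (n : ℝ) * ((A^2)⁻¹)^n) Filter.atTop (nhds 0) :=
    tendsto_self_mul_const_pow_of_lt_one (by positivity) (by
      rw [inv_lt_one_iff₀]; right; exact hA2gt)
  have t3 : Filter.Tendsto (fun n : ℕ => (B^2/A^2)^n) Filter.atTop (nhds 0) :=
    tendsto_pow_atTop_nhds_zero_of_lt_one (by positivity) (by
      rw [div_lt_one (by positivity)]; nlinarith)
  have tsum : Filter.Tendsto (fun n : ℕ => g n / (A^2)^n) Filter.atTop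
      (nhds ((4/5)*(A/(A^2-1)))) := by
    have := (((t1.const_mul (2 - (4/5)*(A/(A^2-1)) - (4/5)*(B/(B^2-1)))).add
      (t2.const_mul (8/5))).add (t3.const_mul ((4/5)*(B/(B^2-1))))).add_const
      ((4/5)*(A/(A^2-1)))
    simp only [mul_zero, add_zero, zero_add] at this
    exact Filter.Tendsto.congr (fun n => (funeq n).symm) this
  -- identify the limit
  have hsub : A^2 - 1 = (5 + 3*s)/2 := by rw [hA_def]; linear_combination hs2/4
  have hc4 : (4/5)*(A/(A^2-1)) = 4*s/25 := by
    rw [hsub, hA_def]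
    have h53 : (5 + 3*s) ≠ 0 := by positivity
    field_simp
    linear_combination (-15)*hs2
  -- the function rewrite: sqrt(g n)/A^n = sqrt(g n / (A^2)^n)
  have hfun : ∀ n : ℕ,
      Real.sqrt (polyInner (fun m => if m = 0 then 1 else 2) (QFM n) (QFM n)).re / A ^ n
        = Real.sqrt (g n / (A^2)^n) := by
    intro n
    rw [hre n, Real.sqrt_div (hgpos n)]
    congr 1
    rw [show (A^2)^n = (A^n)^2 by rw [← pow_mul, ← pow_mul, mul_comm],
      Real.sqrt_sq (pow_nonneg hA0.le n)]
  -- final limit value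
  have hval : Real.sqrt (4*s/25) = 2 * (5 : ℝ) ^ ((1 : ℝ) / 4) / 5 := by
    have ht : ((5:ℝ)^((1:ℝ)/4))^2 = s := by
      rw [← Real.rpow_natCast ((5:ℝ)^((1:ℝ)/4)) 2,
        ← Real.rpow_mul (by norm_num : (0:ℝ) ≤ 5)]
      rw [hs_def, Real.sqrt_eq_rpow]
      norm_num
    have hsq : (2 * (5:ℝ)^((1:ℝ)/4)/5)^2 = 4*s/25 := by
      rw [div_pow, mul_pow]; rw [ht]; norm_num
    rw [← hsq, Real.sqrt_sq (by positivity)]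
  have final := tsum.sqrt
  rw [hc4, hval] at final
  exact Filter.Tendsto.congr (fun n => (hfun n).symm) final


/-- For b(z) = (1+z)/2 (φ_0 = 1, φ_n = 2 for n ≥ 1):
‖Q_n‖_b² = 2 + 4∑_{k=0}^{n-1} a_k², and consequently
‖Q_n‖_b / ((3+√5)/2)^n → 2·5^{1/4}/5 as n → ∞. -/
theorem stmt11 :
    (∀ n : ℕ, 1 ≤ n →
      polyInner (fun m => if m = 0 then 1 else 2) (QFM n) (QFM n)
        = ((2 + 4 * ∑ k ∈ Finset.range n, fibA k ^ 2 : ℝ) : ℂ)) ∧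
    Filter.Tendsto
      (fun n : ℕ =>
        Real.sqrt (polyInner (fun m => if m = 0 then 1 else 2) (QFM n) (QFM n)).re
          / ((3 + Real.sqrt 5) / 2) ^ n)
      Filter.atTop (nhds (2 * (5 : ℝ) ^ ((1 : ℝ) / 4) / 5)) :=
  ⟨fun n _ => main1 n, part2⟩
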